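/- The module action {w^p_{m,a}, x^q_{n,b}}_Λ = (m(q-1)-n(p-1)) x^{p+q-2}_{m+n,a+b} − Λ(a(q-s)-b(p-2)) x^{p+q-1}_{m+n,a+b} defines a Lie algebra module for the Λ-deformed celestial chiral algebra: for all generators, {w, {w', x}} − {w', {w, x}} = {{w,w'}, x}. -/
import Mathlib


/-- Index set for the generators `w^p_{m,a}` and the modes `x^q_{n,b}`:
triples of rationals. -/
abbrev Idx : Type := ℚ × ℚ × ℚ

/-- The Λ-deformed bracket of two Lie algebra generators:
`{w^p_{m,a}, w^q_{n,b}}_Λ = (m(q-1)-n(p-1)) w^{p+q-2}_{m+n,a+b}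
                            − Λ(a(q-2)-b(p-2)) w^{p+q-1}_{m+n,a+b}`. -/
noncomputable def wbr {K : Type*} [Field K] [CharZero K] (Λ : K) (i j : Idx) : Idx →₀ K :=
  ((i.2.1 * (j.1 - 1) - j.2.1 * (i.1 - 1) : ℚ) : K) •
      Finsupp.single (i.1 + j.1 - 2, i.2.1 + j.2.1, i.2.2 + j.2.2) (1 : K)
    - (Λ * ((i.2.2 * (j.1 - 2) - j.2.2 * (i.1 - 2) : ℚ) : K)) •
      Finsupp.single (i.1 + j.1 - 1, i.2.1 + j.2.1, i.2.2 + j.2.2) (1 : K)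

/-- Bilinear extension of the Lie bracket. -/
noncomputable def br {K : Type*} [Field K] [CharZero K] (Λ : K) (f g : Idx →₀ K) : Idx →₀ K :=
  f.sum fun i x => g.sum fun j y => (x * y) • wbr Λ i j

/-- The spin-`s` module action on basis elements:
`{w^p_{m,a}, x^q_{n,b}}_Λ = (m(q-1)-n(p-1)) x^{p+q-2}_{m+n,a+b}
                            − Λ(a(q-s)-b(p-2)) x^{p+q-1}_{m+n,a+b}`. -/
noncomputable def wact {K : Type*} [Field K] [CharZero K] (Λ s : K) (i j : Idx) : Idx →₀ K :=
  ((i.2.1 * (j.1 - 1) - j.2.1 * (i.1 - 1) : ℚ) : K) •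
      Finsupp.single (i.1 + j.1 - 2, i.2.1 + j.2.1, i.2.2 + j.2.2) (1 : K)
    - (Λ * (((i.2.2 : ℚ) : K) * (((j.1 : ℚ) : K) - s)
            - ((j.2.2 : ℚ) : K) * (((i.1 : ℚ) : K) - 2))) •
      Finsupp.single (i.1 + j.1 - 1, i.2.1 + j.2.1, i.2.2 + j.2.2) (1 : K)

/-- Bilinear extension of the action to the free modules. -/
noncomputable def act {K : Type*} [Field K] [CharZero K] (Λ s : K)
    (f v : Idx →₀ K) : Idx →₀ K :=
  f.sum fun i x => v.sum fun j y => (x * y) • wact Λ s i j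


section Helpers
variable {K : Type*} [Field K] [CharZero K] (Λ s : K)

lemma act_single_left' (i : Idx) (v : Idx →₀ K) :
    act Λ s (Finsupp.single i 1) v = Finsupp.linearCombination K (wact Λ s i) v := by
  unfold act
  rw [Finsupp.sum_single_index (by simp)]
  simp [Finsupp.linearCombination_apply]

lemma act_single_right' (k : Idx) (f : Idx →₀ K) :
    act Λ s f (Finsupp.single k 1) =
      Finsupp.linearCombination K (fun i => wact Λ s i k) f := by
  unfold act
  rw [Finsupp.linearCombination_apply]
  refine Finsupp.sum_congr fun i _ => ?_
  rw [Finsupp.sum_single_index (by simp)]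
  simp [mul_comm]

lemma br_single_single' (i j : Idx) :
    br Λ (Finsupp.single i (1:K)) (Finsupp.single j 1) = wbr Λ i j := by
  unfold br
  rw [Finsupp.sum_single_index (by simp), Finsupp.sum_single_index (by simp)]
  simp

end Helpers

set_option maxHeartbeats 1000000 in
/-- The spin-`s` modes form a module (representation) of the Λ-deformed
celestial chiral algebra: `{w,{w',x}} − {w',{w,x}} = {{w,w'},x}`. -/
theorem spin_s_modes_form_module {K : Type*} [Field K] [CharZero K] (Λ s : K)
    (i j k : Idx) :
    act Λ s (Finsupp.single i (1 : K)) (act Λ s (Finsupp.single j 1) (Finsupp.single k 1))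
      - act Λ s (Finsupp.single j 1) (act Λ s (Finsupp.single i 1) (Finsupp.single k 1))
      = act Λ s (br Λ (Finsupp.single i 1) (Finsupp.single j 1)) (Finsupp.single k 1) := by
  obtain ⟨p, m, a⟩ := i
  obtain ⟨q, n, b⟩ := j
  obtain ⟨r, l, c⟩ := k
  rw [br_single_single']
  simp only [act_single_left', act_single_right', map_sub, map_smul,
    Finsupp.linearCombination_single, one_smul, wact, wbr]
  ext x
  simp only [smul_sub, smul_smul, Finsupp.sub_apply, Finsupp.smul_apply, Finsupp.single_apply,
    smul_eq_mul, mul_ite, mul_one, mul_zero]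
  obtain ⟨x1, x2, x3⟩ := x
  ring_nf
  split_ifs <;> push_cast <;> ring
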